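/- arXiv:2604.02231 — 12 statements merged into one kernel-verified Lean document; each statement's English description precedes it below -/
import Mathlib

section
/- A tensor M ∈ R^{[2m,n]} is a T-P tensor if and only if M is both T-column sufficient and T-non-degenerate. -/
open Finset

/-- The contraction product: `(tmul M Z) i = ∑ j, M i j * Z j`. -/
def tmul {m n : ℕ} (M : (Fin m → Fin n) → (Fin m → Fin n) → ℝ)
    (Z : (Fin m → Fin n) → ℝ) : (Fin m → Fin n) → ℝ :=
  fun i => ∑ j : Fin m → Fin n, M i j * Z j

/-- Inner product of tensors. -/
def tinner {m n : ℕ} (A B : (Fin m → Fin n) → ℝ) : ℝ :=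
  ∑ i : Fin m → Fin n, A i * B i

/-- `M` is T-column sufficient. -/
def TColSuff {m n : ℕ} (M : (Fin m → Fin n) → (Fin m → Fin n) → ℝ) : Prop :=
  ∀ Z : (Fin m → Fin n) → ℝ,
    (∀ i, Z i * tmul M Z i ≤ 0) → (∀ i, Z i * tmul M Z i = 0)

/-- `M` is T-column sufficient on the nonnegative orthant. -/
def TColSuffPlus {m n : ℕ} (M : (Fin m → Fin n) → (Fin m → Fin n) → ℝ) : Prop :=
  ∀ Z : (Fin m → Fin n) → ℝ, (∀ i, 0 ≤ Z i) →
    (∀ i, Z i * tmul M Z i ≤ 0) → (∀ i, Z i * tmul M Z i = 0)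

/-- `M` is a T-P tensor. -/
def TP {m n : ℕ} (M : (Fin m → Fin n) → (Fin m → Fin n) → ℝ) : Prop :=
  ∀ Z : (Fin m → Fin n) → ℝ, Z ≠ 0 → ∃ i, 0 < Z i * tmul M Z i

/-- `M` is T-non-degenerate. -/
def TND {m n : ℕ} (M : (Fin m → Fin n) → (Fin m → Fin n) → ℝ) : Prop :=
  ∀ Z : (Fin m → Fin n) → ℝ, Z ≠ 0 → ∃ i, Z i * tmul M Z i ≠ 0

/-- `M` is T-positive semidefinite. -/
def TPSD {m n : ℕ} (M : (Fin m → Fin n) → (Fin m → Fin n) → ℝ) : Prop :=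
  ∀ Z : (Fin m → Fin n) → ℝ, 0 ≤ tinner Z (tmul M Z)

/-- `M` is T-copositive. -/
def TCopositive {m n : ℕ} (M : (Fin m → Fin n) → (Fin m → Fin n) → ℝ) : Prop :=
  ∀ Z : (Fin m → Fin n) → ℝ, (∀ i, 0 ≤ Z i) → 0 ≤ tinner Z (tmul M Z)

/-- `M` is T-semi-positive. -/
def TSemiPos {m n : ℕ} (M : (Fin m → Fin n) → (Fin m → Fin n) → ℝ) : Prop :=
  ∀ Z : (Fin m → Fin n) → ℝ, (∀ i, 0 ≤ Z i) → Z ≠ 0 →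
    ∃ i, 0 < Z i ∧ 0 ≤ tmul M Z i

/-- The solution set of the TLCP. -/
def SOL {m n : ℕ} (M : (Fin m → Fin n) → (Fin m → Fin n) → ℝ)
    (Q : (Fin m → Fin n) → ℝ) : Set ((Fin m → Fin n) → ℝ) :=
  {Z | (∀ i, 0 ≤ Z i) ∧ (∀ i, 0 ≤ tmul M Z i + Q i) ∧
    tinner Z (fun i => tmul M Z i + Q i) = 0}

theorem stmt3 {m n : ℕ} (M : (Fin m → Fin n) → (Fin m → Fin n) → ℝ) :
    TP M ↔ (TColSuff M ∧ TND M) := by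
  constructor
  · intro h
    constructor
    · intro Z hle i
      by_cases hZ : Z = 0
      · simp [hZ, tmul]
      · obtain ⟨j, hj⟩ := h Z hZ
        exact absurd (hle j) (not_le.mpr hj)
    · intro Z hZ
      obtain ⟨j, hj⟩ := h Z hZ
      exact ⟨j, ne_of_gt hj⟩
  · rintro ⟨hcs, hnd⟩ Z hZ
    obtain ⟨j, hj⟩ := hnd Z hZ
    by_contra hc
    push_neg at hc
    exact hj (hcs Z hc j)
end

section
/- Every k-th sequential principal subtensor of a T-column sufficient tensor is T-column sufficient. Precisely, if M ∈ R^{[2m,n]} is T-column sufficient and k ≤ n, then the tensor M^(k) ∈ R^{[2m,k]} defined by restricting all indices of M to {1,...,k} is T-column sufficient. -/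
open Finset

theorem stmt4 {m n k : ℕ} (hk : k ≤ n)
    (M : (Fin m → Fin n) → (Fin m → Fin n) → ℝ) (hM : TColSuff M) :
    TColSuff (fun i j : Fin m → Fin k =>
      M (fun t => Fin.castLE hk (i t)) (fun t => Fin.castLE hk (j t))) := by
  intro Z hZ
  set e : (Fin m → Fin k) → (Fin m → Fin n) := fun i t => Fin.castLE hk (i t) with he
  have einj : Function.Injective e := by
    intro a b hab
    funext t
    have := congrFun hab t
    exact Fin.castLE_injective hk this
  classical
  set Z' : (Fin m → Fin n) → ℝ := fun i' =>
    if h : ∃ i, e i = i' then Z h.choose else 0 with hZ'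
  have hZ'e : ∀ i, Z' (e i) = Z i := by
    intro i
    have h : ∃ j, e j = e i := ⟨i, rfl⟩
    simp only [hZ', dif_pos h]
    exact congrArg Z (einj h.choose_spec)
  have hZ'0 : ∀ i', (¬ ∃ i, e i = i') → Z' i' = 0 := by
    intro i' h; simp [hZ', dif_neg h]
  have htmul : ∀ i', tmul M Z' i' =
      ∑ j : Fin m → Fin k, M i' (e j) * Z j := by
    intro i'
    have : ∑ j : Fin m → Fin k, M i' (e j) * Z j
        = ∑ j' ∈ Finset.univ.image e, M i' j' * Z' j' := by
      rw [Finset.sum_image (fun a _ b _ h => einj h)]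
      exact Finset.sum_congr rfl fun j _ => by rw [hZ'e]
    rw [tmul, this]
    refine (Finset.sum_subset (Finset.subset_univ _) ?_).symm
    intro j' _ hj'
    simp only [Finset.mem_image, Finset.mem_univ, true_and] at hj'
    rw [hZ'0 j' hj', mul_zero]
  have key : ∀ i', Z' i' * tmul M Z' i' = 0 := by
    apply hM
    intro i'
    by_cases h : ∃ i, e i = i'
    · obtain ⟨i, rfl⟩ := h
      rw [hZ'e, htmul]
      exact hZ i
    · rw [hZ'0 i' h, zero_mul]
  intro i
  have := key (e i)
  rwa [hZ'e, htmul] at this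
end

section
/- If M ∈ R^{[2m,n]} is T-column sufficient, then for every Q ∈ R^{[m,n]} the solution set SOL(M,Q) of the tensor linear complementarity problem is convex. -/
open Finset

lemma tmul_add' {m n : ℕ} (M : (Fin m → Fin n) → (Fin m → Fin n) → ℝ)
    (Z₁ Z₂ : (Fin m → Fin n) → ℝ) (a b : ℝ) (i : Fin m → Fin n) :
    tmul M (fun j => a * Z₁ j + b * Z₂ j) i = a * tmul M Z₁ i + b * tmul M Z₂ i := by
  simp only [tmul, Finset.mul_sum, ← Finset.sum_add_distrib]
  exact Finset.sum_congr rfl (fun j _ => by ring)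

lemma tmul_sub' {m n : ℕ} (M : (Fin m → Fin n) → (Fin m → Fin n) → ℝ)
    (Z₁ Z₂ : (Fin m → Fin n) → ℝ) (i : Fin m → Fin n) :
    tmul M (fun j => Z₁ j - Z₂ j) i = tmul M Z₁ i - tmul M Z₂ i := by
  simp only [tmul, ← Finset.sum_sub_distrib]
  exact Finset.sum_congr rfl (fun j _ => by ring)

lemma ptwise_zero {m n : ℕ} (Z W : (Fin m → Fin n) → ℝ) (hZ : ∀ i, 0 ≤ Z i)
    (hW : ∀ i, 0 ≤ W i) (h : tinner Z W = 0) : ∀ i, Z i * W i = 0 := by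
  intro i
  have := (Finset.sum_eq_zero_iff_of_nonneg
    (fun j _ => mul_nonneg (hZ j) (hW j))).mp h
  exact this i (Finset.mem_univ i)

lemma cross_zero {m n : ℕ} (M : (Fin m → Fin n) → (Fin m → Fin n) → ℝ)
    (hM : TColSuff M) (Q : (Fin m → Fin n) → ℝ)
    (Z₁ Z₂ : (Fin m → Fin n) → ℝ) (h₁ : Z₁ ∈ SOL M Q) (h₂ : Z₂ ∈ SOL M Q) :
    ∀ i, Z₁ i * (tmul M Z₂ i + Q i) = 0 ∧ Z₂ i * (tmul M Z₁ i + Q i) = 0 := by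
  obtain ⟨h₁n, h₁w, h₁c⟩ := h₁
  obtain ⟨h₂n, h₂w, h₂c⟩ := h₂
  have p₁ := ptwise_zero Z₁ _ h₁n h₁w h₁c
  have p₂ := ptwise_zero Z₂ _ h₂n h₂w h₂c
  set W : (Fin m → Fin n) → ℝ := fun j => Z₁ j - Z₂ j with hWdef
  have key : ∀ i, W i * tmul M W i =
      - (Z₁ i * (tmul M Z₂ i + Q i) + Z₂ i * (tmul M Z₁ i + Q i)) := by
    intro i
    have := p₁ i
    have := p₂ i
    rw [hWdef]
    simp only [tmul_sub']
    nlinarith [p₁ i, p₂ i]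
  have hle : ∀ i, W i * tmul M W i ≤ 0 := by
    intro i
    rw [key i]
    have := mul_nonneg (h₁n i) (h₂w i)
    have := mul_nonneg (h₂n i) (h₁w i)
    linarith
  have heq := hM W hle
  intro i
  have := heq i
  rw [key i] at this
  have c₁ := mul_nonneg (h₁n i) (h₂w i)
  have c₂ := mul_nonneg (h₂n i) (h₁w i)
  constructor <;> linarith

theorem stmt5 {m n : ℕ} (M : (Fin m → Fin n) → (Fin m → Fin n) → ℝ)
    (hM : TColSuff M) : ∀ Q : (Fin m → Fin n) → ℝ, Convex ℝ (SOL M Q) := by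
  intro Q
  intro Z₁ h₁ Z₂ h₂ a b ha hb hab
  have hc := cross_zero M hM Q Z₁ Z₂ h₁ h₂
  obtain ⟨h₁n, h₁w, h₁c⟩ := h₁
  obtain ⟨h₂n, h₂w, h₂c⟩ := h₂
  have p₁ := ptwise_zero Z₁ _ h₁n h₁w h₁c
  have p₂ := ptwise_zero Z₂ _ h₂n h₂w h₂c
  have hfun : (a • Z₁ + b • Z₂) = fun j => a * Z₁ j + b * Z₂ j := rfl
  rw [hfun]
  have hT : ∀ i, tmul M (fun j => a * Z₁ j + b * Z₂ j) i + Q i =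
      a * (tmul M Z₁ i + Q i) + b * (tmul M Z₂ i + Q i) := by
    intro i; rw [tmul_add']; linear_combination (- Q i) * hab
  refine ⟨fun i => add_nonneg (mul_nonneg ha (h₁n i)) (mul_nonneg hb (h₂n i)), fun i => ?_, ?_⟩
  · rw [hT i]
    exact add_nonneg (mul_nonneg ha (h₁w i)) (mul_nonneg hb (h₂w i))
  · apply Finset.sum_eq_zero
    intro i _
    show (a * Z₁ i + b * Z₂ i) * (tmul M (fun j => a * Z₁ j + b * Z₂ j) i + Q i) = 0
    rw [hT i]
    linear_combination a^2 * p₁ i + a*b*(hc i).1 + a*b*(hc i).2 + b^2 * p₂ i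
end

section
/- M ∈ R^{[2m,n]} is T-column sufficient if and only if SOL(M,Q) is a convex set for every Q ∈ R^{[m,n]}. -/
open Finset

lemma tmul_lin {m n : ℕ} (M : (Fin m → Fin n) → (Fin m → Fin n) → ℝ)
    (a b : ℝ) (X Y : (Fin m → Fin n) → ℝ) (i : Fin m → Fin n) :
    tmul M (fun j => a * X j + b * Y j) i = a * tmul M X i + b * tmul M Y i := by
  simp only [tmul, Finset.mul_sum, ← Finset.sum_add_distrib]
  exact Finset.sum_congr rfl fun j _ => by ring

lemma sol_terms {m n : ℕ} {M : (Fin m → Fin n) → (Fin m → Fin n) → ℝ}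
    {Q Z : (Fin m → Fin n) → ℝ} (hZ : Z ∈ SOL M Q) :
    ∀ i, Z i * (tmul M Z i + Q i) = 0 := by
  obtain ⟨h1, h2, h3⟩ := hZ
  have := (Finset.sum_eq_zero_iff_of_nonneg
    (fun i _ => mul_nonneg (h1 i) (h2 i))).mp h3
  exact fun i => this i (Finset.mem_univ i)

theorem stmt7 {m n : ℕ} (M : (Fin m → Fin n) → (Fin m → Fin n) → ℝ) :
    TColSuff M ↔ ∀ Q : (Fin m → Fin n) → ℝ, Convex ℝ (SOL M Q) := by
  constructor
  · intro hCS Q Z1 hZ1 Z2 hZ2 a b ha hb hab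
    have e1 := sol_terms hZ1
    have e2 := sol_terms hZ2
    -- cross terms vanish
    have hW : ∀ i, (Z1 i - Z2 i) * (tmul M Z1 i - tmul M Z2 i) ≤ 0 := by
      intro i
      have h12 : 0 ≤ Z1 i * (tmul M Z2 i + Q i) :=
        mul_nonneg (hZ1.1 i) (hZ2.2.1 i)
      have h21 : 0 ≤ Z2 i * (tmul M Z1 i + Q i) :=
        mul_nonneg (hZ2.1 i) (hZ1.2.1 i)
      nlinarith [e1 i, e2 i]
    have hWeq : ∀ i, (Z1 i - Z2 i) * (tmul M Z1 i - tmul M Z2 i) = 0 := by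
      have hlin : ∀ i, tmul M (fun j => (1:ℝ) * Z1 j + (-1) * Z2 j) i
          = tmul M Z1 i - tmul M Z2 i := by
        intro i; rw [tmul_lin]; ring
      have := hCS (fun j => (1:ℝ) * Z1 j + (-1) * Z2 j)
        (fun i => by rw [hlin i]; simpa [← sub_eq_add_neg] using hW i)
      intro i
      have h := this i
      rw [hlin i] at h
      simpa [← sub_eq_add_neg] using h
    have hcross : ∀ i, Z1 i * (tmul M Z2 i + Q i) = 0 ∧
        Z2 i * (tmul M Z1 i + Q i) = 0 := by
      intro i
      have h12 : 0 ≤ Z1 i * (tmul M Z2 i + Q i) :=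
        mul_nonneg (hZ1.1 i) (hZ2.2.1 i)
      have h21 : 0 ≤ Z2 i * (tmul M Z1 i + Q i) :=
        mul_nonneg (hZ2.1 i) (hZ1.2.1 i)
      constructor <;> nlinarith [hWeq i, e1 i, e2 i]
    have hx : (a • Z1 + b • Z2) = fun j => a * Z1 j + b * Z2 j := rfl
    have hlinx : ∀ i, tmul M (a • Z1 + b • Z2) i
        = a * tmul M Z1 i + b * tmul M Z2 i := by
      intro i; rw [hx, tmul_lin]
    refine ⟨fun i => add_nonneg (mul_nonneg ha (hZ1.1 i))
      (mul_nonneg hb (hZ2.1 i)), fun i => ?_, ?_⟩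
    · rw [hlinx i]
      have : a * tmul M Z1 i + b * tmul M Z2 i + Q i
          = a * (tmul M Z1 i + Q i) + b * (tmul M Z2 i + Q i) := by
        linear_combination (-Q i) * hab
      rw [this]
      exact add_nonneg (mul_nonneg ha (hZ1.2.1 i)) (mul_nonneg hb (hZ2.2.1 i))
    · unfold tinner
      apply Finset.sum_eq_zero
      intro i _
      show (a * Z1 i + b * Z2 i) * (tmul M (a • Z1 + b • Z2) i + Q i) = 0
      rw [hlinx i]
      linear_combination a^2 * e1 i + a*b*(hcross i).1 + a*b*(hcross i).2
        + b^2 * e2 i + (-(a*Z1 i + b*Z2 i)*Q i) * hab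
  · intro hconv Z hZ i
    rcases eq_or_ne (Z i) 0 with h0 | h0
    · rw [h0]; ring
    set P : (Fin m → Fin n) → ℝ := fun j => max (Z j) 0 with hP
    set N : (Fin m → Fin n) → ℝ := fun j => max (-Z j) 0 with hN
    have hPpos : ∀ j, 0 < Z j → P j = Z j ∧ N j = 0 := by
      intro j h
      constructor
      · simp [hP, max_eq_left h.le]
      · simp [hN, max_eq_right (by linarith : -Z j ≤ 0)]
    have hNneg : ∀ j, Z j < 0 → P j = 0 ∧ N j = -Z j := by
      intro j h
      constructor
      · simp [hP, max_eq_right h.le]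
      · simp [hN, max_eq_left (by linarith : (0:ℝ) ≤ -Z j)]
    have hPN : ∀ j, P j - N j = Z j := by
      intro j
      rcases lt_trichotomy (Z j) 0 with h | h | h
      · rw [(hNneg j h).1, (hNneg j h).2]; ring
      · simp [hP, hN, h]
      · rw [(hPpos j h).1, (hPpos j h).2]; ring
    have hPnn : ∀ j, 0 ≤ P j := fun j => le_max_right _ _
    have hNnn : ∀ j, 0 ≤ N j := fun j => le_max_right _ _
    set Q : (Fin m → Fin n) → ℝ := fun j => -min (tmul M P j) (tmul M N j) with hQ
    have hMZ : ∀ j, tmul M Z j = tmul M P j - tmul M N j := by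
      intro j
      have hz : Z = fun k => (1:ℝ) * P k + (-1) * N k := by
        funext k; rw [← hPN k]; ring
      rw [hz, tmul_lin]; ring
    have hPsol : P ∈ SOL M Q := by
      refine ⟨hPnn, fun j => by simp [hQ, min_le_left], ?_⟩
      apply Finset.sum_eq_zero
      intro j _
      rcases lt_or_ge 0 (Z j) with h | h
      · have hmz : tmul M Z j ≤ 0 := by nlinarith [hZ j]
        have : min (tmul M P j) (tmul M N j) = tmul M P j :=
          min_eq_left (by linarith [hMZ j])
        simp [hQ, this]
      · rcases lt_or_eq_of_le h with h' | h'
        · rw [(hNneg j h').1]; ring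
        · have : P j = 0 := by simp [hP, ← h']
          rw [this]; ring
    have hNsol : N ∈ SOL M Q := by
      refine ⟨hNnn, fun j => by simp [hQ, min_le_right], ?_⟩
      apply Finset.sum_eq_zero
      intro j _
      rcases lt_or_ge (Z j) 0 with h | h
      · have hmz : 0 ≤ tmul M Z j := by nlinarith [hZ j]
        have : min (tmul M P j) (tmul M N j) = tmul M N j :=
          min_eq_right (by linarith [hMZ j])
        simp [hQ, this]
      · rcases lt_or_eq_of_le h with h' | h'
        · rw [(hPpos j h').2]; ring
        · have : N j = 0 := by simp [hN, ← h']
          rw [this]; ring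
    have hu := hconv Q hPsol hNsol (a := ((1:ℝ)/2)) (b := ((1:ℝ)/2))
      (by norm_num) (by norm_num) (by norm_num)
    have hterms := sol_terms hu
    have hui : (((1:ℝ)/2) • P + ((1:ℝ)/2) • N) i = ((1:ℝ)/2) * P i + ((1:ℝ)/2) * N i := rfl
    have hulin : tmul M (((1:ℝ)/2) • P + ((1:ℝ)/2) • N) i
        = ((1:ℝ)/2) * tmul M P i + ((1:ℝ)/2) * tmul M N i := by
      have : (((1:ℝ)/2) • P + ((1:ℝ)/2) • N) = fun j => ((1:ℝ)/2) * P j + ((1:ℝ)/2) * N j := rfl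
      rw [this, tmul_lin]
    have huipos : 0 < ((1:ℝ)/2) * P i + ((1:ℝ)/2) * N i := by
      rcases lt_or_gt_of_ne h0 with h | h
      · have := (hNneg i h).2
        nlinarith [hPnn i]
      · have := (hPpos i h).1
        nlinarith [hNnn i]
    have hzero : tmul M (((1:ℝ)/2) • P + ((1:ℝ)/2) • N) i + Q i = 0 := by
      have ht := hterms i
      rw [hui] at ht
      rcases mul_eq_zero.mp ht with h | h
      · exact absurd h (ne_of_gt huipos)
      · exact h
    have hQi : Q i = -min (tmul M P i) (tmul M N i) := rfl
    rw [hulin, hQi] at hzero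
    have heq : tmul M P i = tmul M N i := by
      rcases le_total (tmul M P i) (tmul M N i) with h | h
      · rw [min_eq_left h] at hzero; linarith
      · rw [min_eq_right h] at hzero; linarith
    rw [hMZ i, heq]; ring
end

section
/- If M ∈ R^{[2m,n]} is T-column sufficient on the nonnegative orthant R^{[m,n]}_+, then M is T-semi-positive: for every nonzero entrywise nonnegative tensor Z there exist indices i₁,...,i_m such that z_{i₁...i_m} > 0 and (MZ)_{i₁...i_m} ≥ 0. -/
open Finset

theorem stmt9 {m n : ℕ} (M : (Fin m → Fin n) → (Fin m → Fin n) → ℝ)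
    (hM : TColSuffPlus M) : TSemiPos M := by
  intro Z hZ hZ0
  by_contra h
  push_neg at h
  have hle : ∀ i, Z i * tmul M Z i ≤ 0 := by
    intro i
    rcases lt_or_eq_of_le (hZ i) with hpos | heq
    · exact mul_nonpos_of_nonneg_of_nonpos (hZ i) (le_of_lt (h i hpos))
    · simp [← heq]
  have hzero := hM Z hZ hle
  obtain ⟨i, hi⟩ : ∃ i, Z i ≠ 0 := by
    by_contra hc; push_neg at hc; exact hZ0 (funext hc)
  have hipos : 0 < Z i := (hZ i).lt_of_ne (Ne.symm hi)
  have := h i hipos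
  have : Z i * tmul M Z i < 0 := mul_neg_of_pos_of_neg hipos this
  linarith [hzero i]
end

section
/- If M ∈ R^{[2m,n]} is T-column sufficient on R^{[m,n]}_+, then for every entrywise positive Q ∈ R^{[m,n]} the tensor linear complementarity problem TLCP(M,Q) has a unique solution, namely Z = 0. -/
open Finset

theorem stmt10 {m n : ℕ} (M : (Fin m → Fin n) → (Fin m → Fin n) → ℝ)
    (hM : TColSuffPlus M) :
    ∀ Q : (Fin m → Fin n) → ℝ, (∀ i, 0 < Q i) → SOL M Q = {0} := by
  intro Q hQ
  ext Z
  simp only [Set.mem_singleton_iff]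
  constructor
  · rintro ⟨hZ, hW, hI⟩
    -- each term of the inner product is nonneg and sums to 0
    have hterm : ∀ i, Z i * (tmul M Z i + Q i) = 0 := by
      have h := (Finset.sum_eq_zero_iff_of_nonneg (fun i _ => mul_nonneg (hZ i) (hW i))).mp hI
      exact fun i => h i (Finset.mem_univ i)
    have hle : ∀ i, Z i * tmul M Z i ≤ 0 := by
      intro i
      have := hterm i
      nlinarith [mul_nonneg (hZ i) (le_of_lt (hQ i))]
    have heq := hM Z hZ hle
    funext i
    have h1 : Z i * Q i = 0 := by
      have := hterm i; have := heq i; nlinarith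
    have := (hQ i).ne'
    have : Z i = 0 := by
      rcases mul_eq_zero.mp h1 with h | h
      · exact h
      · exact absurd h (hQ i).ne'
    simpa using this
  · rintro rfl
    refine ⟨fun i => le_rfl, fun i => ?_, ?_⟩
    · simp [tmul, (hQ i).le]
    · simp [tinner]
end

section
/- A tensor M ∈ R^{[2m,n]} is T-semi-positive if and only if for every entrywise positive Q ∈ R^{[m,n]} the tensor linear complementarity problem TLCP(M,Q) has a unique solution. -/
open Finset

theorem stmt11 {m n : ℕ} (M : (Fin m → Fin n) → (Fin m → Fin n) → ℝ) :
    TSemiPos M ↔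
      ∀ Q : (Fin m → Fin n) → ℝ, (∀ i, 0 < Q i) → ∃! Z, Z ∈ SOL M Q := by
  constructor
  · intro hM Q hQ
    have h0 : (0 : (Fin m → Fin n) → ℝ) ∈ SOL M Q := by
      refine ⟨fun i => le_rfl, fun i => ?_, ?_⟩
      · simp [tmul]; exact (hQ i).le
      · simp [tinner]
    refine ⟨0, h0, ?_⟩
    intro Y hY
    by_contra hY0
    obtain ⟨i, hYi, hMi⟩ := hM Y hY.1 hY0
    have hterm : ∀ j ∈ Finset.univ, 0 ≤ Y j * (tmul M Y j + Q j) :=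
      fun j _ => mul_nonneg (hY.1 j) (hY.2.1 j)
    have hz := (Finset.sum_eq_zero_iff_of_nonneg hterm).mp hY.2.2 i (Finset.mem_univ i)
    have : 0 < Y i * (tmul M Y i + Q i) :=
      mul_pos hYi (by linarith [hQ i])
    linarith
  · intro h Z hZ hZ0
    by_contra hc
    push_neg at hc
    set Q : (Fin m → Fin n) → ℝ :=
      fun i => if 0 < Z i then -(tmul M Z i) else max 1 (-(tmul M Z i)) with hQdef
    have hQ : ∀ i, 0 < Q i := by
      intro i
      by_cases hi : 0 < Z i
      · simpa [hQdef, hi] using hc i hi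
      · simp only [hQdef, hi, if_false]
        exact lt_of_lt_of_le one_pos (le_max_left _ _)
    obtain ⟨W, hW, huniq⟩ := h Q hQ
    have h0 : (0 : (Fin m → Fin n) → ℝ) ∈ SOL M Q := by
      refine ⟨fun i => le_rfl, fun i => ?_, ?_⟩
      · simp [tmul]; exact (hQ i).le
      · simp [tinner]
    have hZmem : Z ∈ SOL M Q := by
      have hzero : ∀ i, Z i * (tmul M Z i + Q i) = 0 := by
        intro i
        by_cases hi : 0 < Z i
        · simp [hQdef, hi]
        · have : Z i = 0 := le_antisymm (not_lt.mp hi) (hZ i)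
          simp [this]
      refine ⟨hZ, fun i => ?_, ?_⟩
      · by_cases hi : 0 < Z i
        · simp [hQdef, hi]
        · simp only [hQdef, hi, if_false]
          have := le_max_right 1 (-(tmul M Z i))
          linarith
      · simp only [tinner]
        exact Finset.sum_eq_zero fun i _ => hzero i
    exact hZ0 ((huniq Z hZmem).trans (huniq 0 h0).symm)
end

section
/- Suppose M ∈ R^{[2m,n]} is T-column sufficient, and suppose Z* and U* are tensors satisfying the KKT-type conditions: (1) 2MZ* + Q − MU* ≥ 0 entrywise, (2) ⟨Z*, 2MZ* + Q − MU*⟩ = 0, (3) U* ≥ 0 entrywise and ⟨U*, MZ* + Q⟩ = 0, (4) Z* ≥ 0 and MZ* + Q ≥ 0 entrywise, and (5) (Z* − U*)_i (M(Z* − U*))_i ≤ 0 for all multi-indices i. Then Z* solves TLCP(M,Q), i.e., ⟨Z*, MZ* + Q⟩ = 0 (indeed z*_i (MZ* + Q)_i = 0 for all i). -/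
open Finset

theorem stmt12 {m n : ℕ} (M : (Fin m → Fin n) → (Fin m → Fin n) → ℝ)
    (hM : TColSuff M) (Q Zs Us : (Fin m → Fin n) → ℝ)
    (h1 : ∀ i, 0 ≤ 2 * tmul M Zs i + Q i - tmul M Us i)
    (h2 : tinner Zs (fun i => 2 * tmul M Zs i + Q i - tmul M Us i) = 0)
    (h3 : (∀ i, 0 ≤ Us i) ∧ tinner Us (fun i => tmul M Zs i + Q i) = 0)
    (h4 : (∀ i, 0 ≤ Zs i) ∧ (∀ i, 0 ≤ tmul M Zs i + Q i))
    (h5 : ∀ i, (Zs i - Us i) * tmul M (fun j => Zs j - Us j) i ≤ 0) :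
    (∀ i, Zs i * (tmul M Zs i + Q i) = 0) ∧
      tinner Zs (fun i => tmul M Zs i + Q i) = 0 := by
  have hlin : ∀ i, tmul M (fun j => Zs j - Us j) i = tmul M Zs i - tmul M Us i := by
    intro i
    simp [tmul, mul_sub, Finset.sum_sub_distrib]
  have hcs := hM _ h5
  have hz : ∀ i ∈ Finset.univ, (0:ℝ) ≤ Zs i * (2 * tmul M Zs i + Q i - tmul M Us i) :=
    fun i _ => mul_nonneg (h4.1 i) (h1 i)
  have h2' := (Finset.sum_eq_zero_iff_of_nonneg hz).mp h2
  have hu : ∀ i ∈ Finset.univ, (0:ℝ) ≤ Us i * (tmul M Zs i + Q i) :=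
    fun i _ => mul_nonneg (h3.1 i) (h4.2 i)
  have h3' := (Finset.sum_eq_zero_iff_of_nonneg hu).mp h3.2
  have key : ∀ i, Zs i * (tmul M Zs i + Q i) = 0 := by
    intro i
    have e1 := h2' i (Finset.mem_univ i)
    have e2 := h3' i (Finset.mem_univ i)
    have e3 := hcs i
    rw [hlin i] at e3
    nlinarith [mul_nonneg (h3.1 i) (h1 i), mul_nonneg (h4.1 i) (h4.2 i)]
  refine ⟨key, ?_⟩
  exact Finset.sum_eq_zero (fun i _ => key i)
end

section
/- For any two tensors Z¹, Z² ∈ SOL(M,Q) with M a T-column sufficient tensor, the cross-complementarity holds: ⟨Z¹, MZ² + Q⟩ = 0 and ⟨Z², MZ¹ + Q⟩ = 0. -/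
open Finset

theorem stmt15 {m n : ℕ} (M : (Fin m → Fin n) → (Fin m → Fin n) → ℝ)
    (hM : TColSuff M) (Q Z1 Z2 : (Fin m → Fin n) → ℝ)
    (hZ1 : Z1 ∈ SOL M Q) (hZ2 : Z2 ∈ SOL M Q) :
    tinner Z1 (fun i => tmul M Z2 i + Q i) = 0 ∧
      tinner Z2 (fun i => tmul M Z1 i + Q i) = 0 := by
  obtain ⟨h1a, h1b, h1c⟩ := hZ1
  obtain ⟨h2a, h2b, h2c⟩ := hZ2
  have e1 : ∀ i, Z1 i * (tmul M Z1 i + Q i) = 0 := by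
    have := (Finset.sum_eq_zero_iff_of_nonneg
      (fun i _ => mul_nonneg (h1a i) (h1b i))).mp h1c
    intro i; exact this i (Finset.mem_univ i)
  have e2 : ∀ i, Z2 i * (tmul M Z2 i + Q i) = 0 := by
    have := (Finset.sum_eq_zero_iff_of_nonneg
      (fun i _ => mul_nonneg (h2a i) (h2b i))).mp h2c
    intro i; exact this i (Finset.mem_univ i)
  set W : (Fin m → Fin n) → ℝ := fun i => Z1 i - Z2 i with hWdef
  have hW : ∀ i, tmul M W i = tmul M Z1 i - tmul M Z2 i := by
    intro i
    simp only [tmul, hWdef, mul_sub, Finset.sum_sub_distrib]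
  have key : ∀ i, W i * tmul M W i ≤ 0 := by
    intro i
    rw [hW i]
    have expand : W i * (tmul M Z1 i - tmul M Z2 i) =
        Z1 i * (tmul M Z1 i + Q i) + Z2 i * (tmul M Z2 i + Q i)
          - (Z1 i * (tmul M Z2 i + Q i) + Z2 i * (tmul M Z1 i + Q i)) := by
      simp only [hWdef]; ring
    rw [expand, e1 i, e2 i]
    have := mul_nonneg (h1a i) (h2b i)
    have := mul_nonneg (h2a i) (h1b i)
    linarith
  have keq := hM W key
  have each : ∀ i, Z1 i * (tmul M Z2 i + Q i) = 0 ∧ Z2 i * (tmul M Z1 i + Q i) = 0 := by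
    intro i
    have h := keq i
    rw [hW i] at h
    have expand : W i * (tmul M Z1 i - tmul M Z2 i) =
        Z1 i * (tmul M Z1 i + Q i) + Z2 i * (tmul M Z2 i + Q i)
          - (Z1 i * (tmul M Z2 i + Q i) + Z2 i * (tmul M Z1 i + Q i)) := by
      simp only [hWdef]; ring
    rw [expand, e1 i, e2 i] at h
    have n1 := mul_nonneg (h1a i) (h2b i)
    have n2 := mul_nonneg (h2a i) (h1b i)
    constructor <;> linarith
  constructor
  · exact Finset.sum_eq_zero (fun i _ => (each i).1)
  · exact Finset.sum_eq_zero (fun i _ => (each i).2)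
end

section
/- Let M ∈ R^{[4,2]} have entries m_{2111} = m_{2222} = 1, m_{1121} = −2, and all other entries zero. Then M is T-column sufficient but not T-positive semidefinite. -/
open Finset

lemma sum_expand (f : (Fin 2 → Fin 2) → ℝ) :
    ∑ j, f j = f ![0,0] + f ![0,1] + f ![1,0] + f ![1,1] := by
  rw [← (piFinTwoEquiv (fun _ => Fin 2)).symm.sum_comp]
  simp only [Fintype.sum_prod_type, Fin.sum_univ_two, piFinTwoEquiv,
    Equiv.coe_fn_symm_mk]
  have h : ∀ a b : Fin 2, (Fin.cons a (Fin.cons b finZeroElim) : Fin 2 → Fin 2) = ![a,b] := by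
    intro a b; funext k; fin_cases k <;> rfl
  rw [h,h,h,h]; ring

theorem stmt17 (M : (Fin 2 → Fin 2) → (Fin 2 → Fin 2) → ℝ)
    (hM : ∀ i j : Fin 2 → Fin 2, M i j =
      if i 0 = 1 ∧ i 1 = 0 ∧ j 0 = 0 ∧ j 1 = 0 then (1 : ℝ)
      else if i 0 = 1 ∧ i 1 = 1 ∧ j 0 = 1 ∧ j 1 = 1 then 1
      else if i 0 = 0 ∧ i 1 = 0 ∧ j 0 = 1 ∧ j 1 = 0 then -2
      else 0) :
    TColSuff M ∧ ¬ TPSD M := by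
  have key : ∀ Z : (Fin 2 → Fin 2) → ℝ,
      tmul M Z ![0,0] = -2 * Z ![1,0] ∧ tmul M Z ![0,1] = 0 ∧
      tmul M Z ![1,0] = Z ![0,0] ∧ tmul M Z ![1,1] = Z ![1,1] := by
    intro Z
    refine ⟨?_, ?_, ?_, ?_⟩ <;>
    · show (∑ j : Fin 2 → Fin 2, M _ j * Z j) = _
      rw [sum_expand]
      norm_num [hM]
  constructor
  · intro Z hle i
    have h00 := hle ![0,0]; have h10 := hle ![1,0]; have h11 := hle ![1,1]
    obtain ⟨k1,k2,k3,k4⟩ := key Z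
    rw [k1] at h00; rw [k3] at h10; rw [k4] at h11
    have hi : i = ![i 0, i 1] := by funext k; fin_cases k <;> rfl
    rw [hi]
    have h0 : i 0 = 0 ∨ i 0 = 1 := by omega
    have h1 : i 1 = 0 ∨ i 1 = 1 := by omega
    rcases h0 with h0 | h0 <;> rcases h1 with h1 | h1 <;> rw [h0, h1]
    · rw [k1]; nlinarith
    · rw [k2]; ring
    · rw [k3]; nlinarith
    · rw [k4]; nlinarith
  · intro h
    have := h (fun j => if j 1 = 0 then 1 else 0)
    obtain ⟨k1,k2,k3,k4⟩ := key (fun j => if j 1 = 0 then 1 else 0)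
    rw [tinner, sum_expand, k1, k2, k3, k4] at this
    norm_num at this
end

section
/- Let M ∈ R^{[4,2]} have entries m_{1112} = −10, m_{1212} = m_{2122} = m_{2211} = 1, and all other entries zero. Then M is T-column sufficient on the nonnegative orthant R^{[2,2]}_+ but is not T-copositive. -/
open Finset

lemma hsum18 (g : (Fin 2 → Fin 2) → ℝ) :
    ∑ j : Fin 2 → Fin 2, g j = g ![0,0] + g ![0,1] + g ![1,0] + g ![1,1] := by
  have hc : ∀ a b : Fin 2, (Fin.cons a (Fin.cons b finZeroElim) : Fin 2 → Fin 2) = ![a,b] := by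
    intro a b; funext k; fin_cases k <;> rfl
  rw [← (piFinTwoEquiv fun _ => Fin 2).symm.sum_comp]
  simp only [Fintype.sum_prod_type, Fin.sum_univ_two, piFinTwoEquiv_symm_apply, hc]
  ring

theorem stmt18 (M : (Fin 2 → Fin 2) → (Fin 2 → Fin 2) → ℝ)
    (hM : ∀ i j : Fin 2 → Fin 2, M i j =
      if i 0 = 0 ∧ i 1 = 0 ∧ j 0 = 0 ∧ j 1 = 1 then (-10 : ℝ)
      else if i 0 = 0 ∧ i 1 = 1 ∧ j 0 = 0 ∧ j 1 = 1 then 1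
      else if i 0 = 1 ∧ i 1 = 0 ∧ j 0 = 1 ∧ j 1 = 1 then 1
      else if i 0 = 1 ∧ i 1 = 1 ∧ j 0 = 0 ∧ j 1 = 0 then 1
      else 0) :
    TColSuffPlus M ∧ ¬ TCopositive M := by
  have htm : ∀ (Z : (Fin 2 → Fin 2) → ℝ) (i : Fin 2 → Fin 2),
      tmul M Z i = M i ![0,0] * Z ![0,0] + M i ![0,1] * Z ![0,1]
        + M i ![1,0] * Z ![1,0] + M i ![1,1] * Z ![1,1] := by
    intro Z i; exact hsum18 _
  constructor
  · intro Z hZ hle i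
    have h01 := hle ![0,1]
    rw [htm] at h01
    simp only [hM] at h01
    norm_num at h01
    have hz01 : Z ![0,1] = 0 := by nlinarith [sq_nonneg (Z ![0,1])]
    have h10 := hle ![1,0]
    rw [htm] at h10
    simp only [hM] at h10
    norm_num at h10
    have h10' : Z ![1,0] * Z ![1,1] = 0 :=
      le_antisymm h10 (mul_nonneg (hZ _) (hZ _))
    have h11 := hle ![1,1]
    rw [htm] at h11
    simp only [hM] at h11
    norm_num at h11
    have h11' : Z ![1,1] * Z ![0,0] = 0 :=
      le_antisymm h11 (mul_nonneg (hZ _) (hZ _))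
    have hi : i = ![i 0, i 1] := by funext k; fin_cases k <;> rfl
    rcases (by omega : i 0 = 0 ∨ i 0 = 1) with h0 | h0 <;>
      rcases (by omega : i 1 = 0 ∨ i 1 = 1) with h1 | h1 <;>
      rw [hi, h0, h1, htm] <;> simp only [hM] <;> norm_num
    · simp [hz01]
    · simp [hz01]
    · exact mul_eq_zero.mp h10'
    · exact mul_eq_zero.mp h11'
  · intro h
    have := h (fun _ => 1) (fun _ => zero_le_one)
    rw [tinner, hsum18] at this
    simp only [htm, hM] at this
    norm_num at this
end

section
/- Let M ∈ R^{[4,2]} have entries m_{1111} = m_{1212} = m_{2121} = m_{2222} = 1, m_{1122} = m_{1221} = −1, m_{2112} = m_{2211} = −2, and all other entries zero. Then M is T-non-degenerate but not a T-P tensor. -/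
open Finset

theorem stmt19 (M : (Fin 2 → Fin 2) → (Fin 2 → Fin 2) → ℝ)
    (hM : ∀ i j : Fin 2 → Fin 2, M i j =
      if i 0 = 0 ∧ i 1 = 0 ∧ j 0 = 0 ∧ j 1 = 0 then (1 : ℝ)
      else if i 0 = 0 ∧ i 1 = 1 ∧ j 0 = 0 ∧ j 1 = 1 then 1
      else if i 0 = 1 ∧ i 1 = 0 ∧ j 0 = 1 ∧ j 1 = 0 then 1
      else if i 0 = 1 ∧ i 1 = 1 ∧ j 0 = 1 ∧ j 1 = 1 then 1
      else if i 0 = 0 ∧ i 1 = 0 ∧ j 0 = 1 ∧ j 1 = 1 then -1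
      else if i 0 = 0 ∧ i 1 = 1 ∧ j 0 = 1 ∧ j 1 = 0 then -1
      else if i 0 = 1 ∧ i 1 = 0 ∧ j 0 = 0 ∧ j 1 = 1 then -2
      else if i 0 = 1 ∧ i 1 = 1 ∧ j 0 = 0 ∧ j 1 = 0 then -2
      else 0) :
    TND M ∧ ¬ TP M := by
  have hsum : ∀ f : (Fin 2 → Fin 2) → ℝ,
      ∑ j, f j = f ![0,0] + f ![0,1] + f ![1,0] + f ![1,1] := by
    intro f
    rw [show (univ : Finset (Fin 2 → Fin 2)) = {![0,0],![0,1],![1,0],![1,1]} from by decide]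
    rw [Finset.sum_insert (by decide), Finset.sum_insert (by decide),
      Finset.sum_insert (by decide), Finset.sum_singleton]
    ring
  have hcases : ∀ i : Fin 2 → Fin 2, i = ![0,0] ∨ i = ![0,1] ∨ i = ![1,0] ∨ i = ![1,1] := by
    decide
  have ht : ∀ Z : (Fin 2 → Fin 2) → ℝ,
      tmul M Z ![0,0] = Z ![0,0] - Z ![1,1] ∧
      tmul M Z ![0,1] = Z ![0,1] - Z ![1,0] ∧
      tmul M Z ![1,0] = Z ![1,0] - 2*Z ![0,1] ∧
      tmul M Z ![1,1] = Z ![1,1] - 2*Z ![0,0] := by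
    intro Z
    refine ⟨?_, ?_, ?_, ?_⟩ <;>
      · show (∑ j : Fin 2 → Fin 2, M _ j * Z j) = _
        rw [hsum]
        simp [hM]
        ring
  have aux : ∀ a d : ℝ, a*(a-d) = 0 → d*(d-2*a) = 0 → a = 0 ∧ d = 0 := by
    intro a d h1 h2
    rcases mul_eq_zero.mp h1 with h | h
    · subst h
      constructor
      · rfl
      · nlinarith [sq_nonneg d]
    · have ha : a = d := by linarith
      subst ha
      have hd : a = 0 := by nlinarith [sq_nonneg a]
      exact ⟨hd, hd⟩
  constructor
  · intro Z hZ
    by_contra h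
    push_neg at h
    apply hZ
    obtain ⟨h1, h2, h3, h4⟩ := ht Z
    have e1 := h ![0,0]; have e2 := h ![0,1]
    have e3 := h ![1,0]; have e4 := h ![1,1]
    rw [h1] at e1; rw [h2] at e2; rw [h3] at e3; rw [h4] at e4
    obtain ⟨ha, hd⟩ := aux _ _ e1 e4
    obtain ⟨hb, hc⟩ := aux _ _ e2 e3
    funext i
    rcases hcases i with hi | hi | hi | hi <;> subst hi <;> assumption
  · intro hTP
    obtain ⟨i, hi⟩ := hTP (fun _ => 1) (by
      intro hcon
      have := congrFun hcon ![0,0]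
      norm_num at this)
    obtain ⟨h1, h2, h3, h4⟩ := ht (fun _ => (1:ℝ))
    rcases hcases i with hi' | hi' | hi' | hi' <;> subst hi' <;>
      simp only [h1, h2, h3, h4] at hi <;> norm_num at hi
end
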